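/- arXiv:0810.2937 — 7 statements merged into one kernel-verified Lean document; each statement's English description precedes it below -/
import Mathlib

section
/- For every pure classical n↦1 strategy P = (E, D) there exists a classical n↦1 strategy with shared randomness (a probability distribution μ over pure strategies) whose worst-case success probability equals the average success probability of P; that is, min over all inputs (x,i) of the μ-probability that a sampled pure strategy (E', D') satisfies D' i (E' x) = x i is equal to (1/(n·2^n)) · Σ_{x ∈ {0,1}^n} Σ_{i < n} [D i (E x) = x i]. -/
open scoped ENNReal

/-- A pure classical `n ↦ 1` strategy: an encoding function together with `n`
decoding functions. -/
abbrev PureStrat (n : ℕ) := ((Fin n → Bool) → Bool) × (Fin n → Bool → Bool)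

/-- The worst-case success probability of a classical strategy with shared randomness,
i.e. of a probability distribution `μ` over pure strategies: the minimum over all
inputs `(x, i)` of the `μ`-probability that a sampled pure strategy answers correctly. -/
noncomputable def srWorstCase (n : ℕ) (μ : PMF (PureStrat n)) : ℝ≥0∞ :=
  ⨅ (x : Fin n → Bool) (i : Fin n), μ.toOuterMeasure {s | s.2 i (s.1 x) = x i}

/-- The average success probability of a pure classical strategy `(E, D)`. -/
noncomputable def avgSuccess (n : ℕ) (E : (Fin n → Bool) → Bool)
    (D : Fin n → Bool → Bool) : ℝ≥0∞ :=
  (1 / ((n : ℝ≥0∞) * 2 ^ n)) *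
    ∑ x : Fin n → Bool, ∑ i : Fin n, (if D i (E x) = x i then 1 else 0)

/-- For every pure classical strategy there is a strategy with shared randomness whose
worst-case success probability equals the average success probability of the pure one. -/
theorem stmt0 (n : ℕ) (hn : 1 ≤ n) (E : (Fin n → Bool) → Bool)
    (D : Fin n → Bool → Bool) :
    ∃ μ : PMF (PureStrat n), srWorstCase n μ = avgSuccess n E D := by
  haveI : NeZero n := ⟨by omega⟩
  set f : ((Fin n → Bool) × Fin n) → PureStrat n := fun zk =>
    (fun x => E (fun j => xor (x (j + zk.2)) (zk.1 j)),
     fun i c => xor (D (i - zk.2) c) (zk.1 (i - zk.2))) with hf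
  refine ⟨(PMF.uniformOfFintype ((Fin n → Bool) × Fin n)).map f, ?_⟩
  have key : ∀ (x : Fin n → Bool) (i : Fin n),
      ((PMF.uniformOfFintype ((Fin n → Bool) × Fin n)).map f).toOuterMeasure
        {s : PureStrat n | s.2 i (s.1 x) = x i} = avgSuccess n E D := by
    intro x i
    classical
    rw [PMF.toOuterMeasure_map_apply, PMF.uniformOfFintype,
      PMF.toOuterMeasure_uniformOfFinset_apply]
    -- the preimage set
    have hset : (f ⁻¹' {s : PureStrat n | s.2 i (s.1 x) = x i}) =
        {zk : (Fin n → Bool) × Fin n |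
          D (i - zk.2) (E (fun j => xor (x (j + zk.2)) (zk.1 j)))
            = xor (x i) (zk.1 (i - zk.2))} := by
      ext ⟨z, k⟩
      simp only [Set.mem_preimage, Set.mem_setOf_eq, hf]
      constructor
      · intro h
        rw [← h]
        cases D (i - k) (E fun j => xor (x (j + k)) (z j)) <;> cases z (i - k) <;> simp
      · intro h
        rw [h]
        cases x i <;> cases z (i - k) <;> simp
    -- bijection with the "success" set of the pure strategy
    let e : ((Fin n → Bool) × Fin n) ≃ ((Fin n → Bool) × Fin n) :=
      { toFun := fun zk => (fun m => xor (x (m + zk.2)) (zk.1 m), i - zk.2)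
        invFun := fun yj => (fun m => xor (x (m + (i - yj.2))) (yj.1 m), i - yj.2)
        left_inv := by
          rintro ⟨z, k⟩
          simp only [sub_sub_cancel]
          refine Prod.ext ?_ rfl
          funext m
          cases x (m + k) <;> cases z m <;> simp
        right_inv := by
          rintro ⟨y, j⟩
          simp only [sub_sub_cancel]
          refine Prod.ext ?_ rfl
          funext m
          cases x (m + (i - j)) <;> cases y m <;> simp }
    have hfcard : (Finset.univ.filter (· ∈ f ⁻¹' {s : PureStrat n | s.2 i (s.1 x) = x i})).card
        = (Finset.univ.filter
            (fun p : (Fin n → Bool) × Fin n => D p.2 (E p.1) = p.1 p.2)).card := by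
      refine Finset.card_equiv e ?_
      rintro ⟨z, k⟩
      simp only [Finset.mem_filter, Finset.mem_univ, true_and, hset, Set.mem_setOf_eq, e,
        Equiv.coe_fn_mk]
      have h1 : xor (x ((i - k) + k)) (z (i - k)) = xor (x i) (z (i - k)) := by
        rw [sub_add_cancel]
      constructor
      · intro h; rw [h, h1]
      · intro h; rw [h1] at h; exact h
    have hsum : (∑ x' : Fin n → Bool, ∑ i' : Fin n,
        (if D i' (E x') = x' i' then (1 : ℝ≥0∞) else 0)) =
        ((Finset.univ.filter
            (fun p : (Fin n → Bool) × Fin n => D p.2 (E p.1) = p.1 p.2)).card : ℕ) := by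
      rw [Finset.card_filter]
      push_cast
      rw [← Finset.univ_product_univ, Finset.sum_product]
    have hden : (((Finset.univ : Finset ((Fin n → Bool) × Fin n)).card : ℕ) : ℝ≥0∞)
        = (n : ℝ≥0∞) * 2 ^ n := by
      rw [Finset.card_univ, Fintype.card_prod, Fintype.card_fun]
      simp only [Fintype.card_bool, Fintype.card_fin]
      push_cast
      ring
    rw [hfcard]
    simp only [avgSuccess]
    rw [hsum, hden, div_eq_mul_inv, one_div, mul_comm]
  simp only [srWorstCase, key]
  rw [iInf_const, iInf_const]
end

section
/- The supremum, over all classical n↦1 strategies with shared randomness μ, of the worst-case success probability of μ equals the maximum, over all pure classical n↦1 strategies P, of the average success probability of P. -/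
open scoped ENNReal

namespace Stmt1Aux

/-- The raw count of successes of a pure strategy. -/
noncomputable def cnt (n : ℕ) (P : PureStrat n) : ℝ≥0∞ :=
  ∑ x : Fin n → Bool, ∑ i : Fin n, (if P.2 i (P.1 x) = x i then 1 else 0)

lemma card_ne_zero {n : ℕ} (hn : 1 ≤ n) : ((n : ℝ≥0∞) * 2 ^ n) ≠ 0 := by
  apply mul_ne_zero
  · exact Nat.cast_ne_zero.mpr (by omega)
  · exact pow_ne_zero _ two_ne_zero

lemma card_ne_top (n : ℕ) : ((n : ℝ≥0∞) * 2 ^ n) ≠ ⊤ :=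
  ENNReal.mul_ne_top (ENNReal.natCast_ne_top n) (ENNReal.pow_ne_top ENNReal.ofNat_ne_top)

lemma avg_eq {n : ℕ} (hn : 1 ≤ n) (P : PureStrat n) :
    ((n : ℝ≥0∞) * 2 ^ n) * avgSuccess n P.1 P.2 = cnt n P := by
  rw [avgSuccess, ← mul_assoc, one_div, ENNReal.mul_inv_cancel (card_ne_zero hn) (card_ne_top n),
    one_mul]
  rfl

lemma prob_eq {n : ℕ} (μ : PMF (PureStrat n)) (x : Fin n → Bool) (i : Fin n) :
    μ.toOuterMeasure {s | s.2 i (s.1 x) = x i}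
      = ∑' s : PureStrat n, μ s * (if s.2 i (s.1 x) = x i then 1 else 0) := by
  rw [PMF.toOuterMeasure_apply]
  congr 1; funext s
  by_cases h : s.2 i (s.1 x) = x i <;> simp [Set.indicator_apply, h]

lemma le_dir {n : ℕ} (hn : 1 ≤ n) (μ : PMF (PureStrat n)) :
    srWorstCase n μ ≤ ⨆ P : PureStrat n, avgSuccess n P.1 P.2 := by
  rw [← ENNReal.mul_le_mul_iff_right (card_ne_zero hn) (card_ne_top n)]
  calc ((n : ℝ≥0∞) * 2 ^ n) * srWorstCase n μ
      = ∑ _x : Fin n → Bool, ∑ _i : Fin n, srWorstCase n μ := by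
        simp only [Finset.sum_const, Finset.card_univ, Fintype.card_fun, Fintype.card_fin,
          Fintype.card_bool, nsmul_eq_mul, Nat.cast_pow, Nat.cast_ofNat]
        ring
    _ ≤ ∑ x : Fin n → Bool, ∑ i : Fin n, μ.toOuterMeasure {s | s.2 i (s.1 x) = x i} := by
        gcongr with x _ i _
        rw [srWorstCase]
        exact iInf_le_of_le x (iInf_le _ i)
    _ = ∑' s : PureStrat n, μ s * cnt n s := by
        simp_rw [prob_eq]
        have swap : ∀ {ι : Type} [Fintype ι] (f : ι → PureStrat n → ℝ≥0∞),
            (∑ a : ι, ∑' s : PureStrat n, f a s) = ∑' s : PureStrat n, ∑ a : ι, f a s := by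
          intro ι _ f; exact (Summable.tsum_finsetSum (fun _ _ => ENNReal.summable)).symm
        simp only [swap]
        congr 1; funext s
        rw [cnt]
        simp_rw [Finset.mul_sum]
    _ ≤ ∑' s : PureStrat n, μ s * (((n : ℝ≥0∞) * 2 ^ n) * ⨆ P : PureStrat n, avgSuccess n P.1 P.2) := by
        gcongr with s
        rw [← avg_eq hn s]
        gcongr
        exact le_iSup (fun P : PureStrat n => avgSuccess n P.1 P.2) s
    _ = ((n : ℝ≥0∞) * 2 ^ n) * ⨆ P : PureStrat n, avgSuccess n P.1 P.2 := by
        rw [ENNReal.tsum_mul_right, PMF.tsum_coe, one_mul]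

/-- Transform a pure strategy by a random shift `k` and mask `z`. -/
def tf {n : ℕ} (P : PureStrat n) (kz : Fin n × (Fin n → Bool)) : PureStrat n :=
  (fun x => P.1 (fun j => xor (x (j + kz.1)) (kz.2 j)),
   fun i b => xor (P.2 (i - kz.1) b) (kz.2 (i - kz.1)))

noncomputable def μP {n : ℕ} [NeZero n] (P : PureStrat n) : PMF (PureStrat n) :=
  PMF.map (tf P) (PMF.uniformOfFintype (Fin n × (Fin n → Bool)))

lemma prob_μP {n : ℕ} [NeZero n] (P : PureStrat n) (x : Fin n → Bool) (i : Fin n) :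
    (μP P).toOuterMeasure {s | s.2 i (s.1 x) = x i} = avgSuccess n P.1 P.2 := by
  classical
  have hxor : ∀ a b c : Bool, (xor a b = c) ↔ (a = xor c b) := by decide
  rw [μP, PMF.toOuterMeasure_map_apply, PMF.toOuterMeasure_apply, tsum_fintype]
  have hmem : ∀ kz : Fin n × (Fin n → Bool),
      kz ∈ tf P ⁻¹' {s : PureStrat n | s.2 i (s.1 x) = x i} ↔
        P.2 (i - kz.1) (P.1 (fun j => xor (x (j + kz.1)) (kz.2 j)))
          = xor (x ((i - kz.1) + kz.1)) (kz.2 (i - kz.1)) := by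
    intro kz
    simp only [Set.mem_preimage, Set.mem_setOf_eq, tf, hxor, sub_add_cancel]
  have hind : ∀ kz : Fin n × (Fin n → Bool),
      Set.indicator (tf P ⁻¹' {s : PureStrat n | s.2 i (s.1 x) = x i})
        (⇑(PMF.uniformOfFintype (Fin n × (Fin n → Bool)))) kz
      = ((Fintype.card (Fin n × (Fin n → Bool)) : ℝ≥0∞))⁻¹ *
          (if P.2 (i - kz.1) (P.1 (fun j => xor (x (j + kz.1)) (kz.2 j)))
            = xor (x ((i - kz.1) + kz.1)) (kz.2 (i - kz.1)) then 1 else 0) := by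
    intro kz
    by_cases h : P.2 (i - kz.1) (P.1 (fun j => xor (x (j + kz.1)) (kz.2 j)))
        = xor (x ((i - kz.1) + kz.1)) (kz.2 (i - kz.1))
    · rw [Set.indicator_of_mem ((hmem kz).mpr h), if_pos h, mul_one,
        PMF.uniformOfFintype_apply]
    · rw [Set.indicator_of_notMem (fun hc => h ((hmem kz).mp hc)), if_neg h, mul_zero]
  rw [Finset.sum_congr rfl (fun kz _ => hind kz), ← Finset.mul_sum]
  have count : (∑ kz : Fin n × (Fin n → Bool),
      (if P.2 (i - kz.1) (P.1 (fun j => xor (x (j + kz.1)) (kz.2 j)))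
          = xor (x ((i - kz.1) + kz.1)) (kz.2 (i - kz.1)) then (1:ℝ≥0∞) else 0))
      = ∑ y : Fin n → Bool, ∑ j : Fin n, (if P.2 j (P.1 y) = y j then (1:ℝ≥0∞) else 0) := by
    rw [Fintype.sum_prod_type]
    have hz : ∀ k : Fin n,
        (∑ z : Fin n → Bool, (if P.2 (i - k) (P.1 (fun j => xor (x (j + k)) (z j)))
            = xor (x ((i - k) + k)) (z (i - k)) then (1:ℝ≥0∞) else 0))
        = ∑ y : Fin n → Bool, (if P.2 (i - k) (P.1 y) = y (i - k) then (1:ℝ≥0∞) else 0) := by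
      intro k
      have hinv : Function.Involutive (fun z : Fin n → Bool => fun j => xor (x (j + k)) (z j)) := by
        intro z; funext j; simp
      exact Fintype.sum_bijective _ hinv.bijective _ _ (fun z => rfl)
    rw [Finset.sum_congr rfl (fun k _ => hz k)]
    rw [Fintype.sum_equiv (Equiv.subLeft i)
      (fun k => ∑ y : Fin n → Bool, (if P.2 (i - k) (P.1 y) = y (i - k) then (1:ℝ≥0∞) else 0))
      (fun j => ∑ y : Fin n → Bool, (if P.2 j (P.1 y) = y j then (1:ℝ≥0∞) else 0))
      (fun k => rfl)]
    exact Finset.sum_comm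
  rw [count, avgSuccess]
  congr 1
  rw [one_div]
  congr 1
  simp [Fintype.card_prod, Fintype.card_fun, mul_comm]

lemma worst_μP {n : ℕ} [NeZero n] (P : PureStrat n) :
    srWorstCase n (μP P) = avgSuccess n P.1 P.2 := by
  rw [srWorstCase]
  simp_rw [prob_μP]
  rw [iInf_const, iInf_const]

end Stmt1Aux

/-- The supremum over strategies with shared randomness of the worst-case success
probability equals the maximum over pure strategies of the average success probability. -/
theorem stmt1 (n : ℕ) (hn : 1 ≤ n) :
    (⨆ μ : PMF (PureStrat n), srWorstCase n μ) =
      ⨆ P : PureStrat n, avgSuccess n P.1 P.2 := by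
  haveI : NeZero n := ⟨by omega⟩
  apply le_antisymm
  · exact iSup_le (Stmt1Aux.le_dir hn)
  · refine iSup_le fun P => ?_
    calc avgSuccess n P.1 P.2 = srWorstCase n (Stmt1Aux.μP P) := (Stmt1Aux.worst_μP P).symm
      _ ≤ ⨆ μ, srWorstCase n μ := le_iSup _ _
end

section
/- The pure classical n↦1 strategy whose encoding function is the majority function maj(x) (equal to 1 if the Hamming weight of x is at least n/2, and 0 otherwise) and whose decoding functions are all the identity on {0,1} is optimal: for every encoding function E : {0,1}^n → {0,1} and every family of decoding functions D : Fin n → ({0,1} → {0,1}), Σ_{x ∈ {0,1}^n} Σ_{i < n} [D i (E x) = x i] ≤ Σ_{x ∈ {0,1}^n} Σ_{i < n} [maj(x) = x i]. -/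
/-- The Hamming weight of a bit string `x : Fin n → Bool` (the number of ones). -/
def hammingWeight (n : ℕ) (x : Fin n → Bool) : ℕ :=
  (Finset.univ.filter fun i => x i = true).card

/-- The majority function: `1` iff the Hamming weight of `x` is at least `n / 2`. -/
def maj (n : ℕ) (x : Fin n → Bool) : Bool :=
  decide (n ≤ 2 * hammingWeight n x)

namespace Stmt4Aux

open Finset

def sgn (b : Bool) : ℤ := if b then 1 else -1

def esum (n : ℕ) (S : Finset (Fin n)) (x : Fin n → Bool) : ℤ := ∑ i ∈ S, sgn (x i)

/-- Summing over the hypercube is invariant under XOR with a fixed mask. -/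
lemma sum_mask {n : ℕ} (m : Fin n → Bool) (f : (Fin n → Bool) → ℤ) :
    ∑ x : Fin n → Bool, f (fun i => xor (x i) (m i)) = ∑ x : Fin n → Bool, f x := by
  apply Fintype.sum_bijective (fun x : Fin n → Bool => fun i => xor (x i) (m i))
  · apply Function.Involutive.bijective
    intro x
    funext i
    show xor (xor (x i) (m i)) (m i) = x i
    cases x i <;> cases m i <;> rfl
  · intro x; rfl

lemma esum_flip {n : ℕ} (S : Finset (Fin n)) (j : Fin n) (hj : j ∉ S) (x : Fin n → Bool) :
    esum n S (fun i => xor (x i) (if i = j then true else false)) = esum n S x := by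
  apply Finset.sum_congr rfl
  intro i hi
  have : i ≠ j := by rintro rfl; exact hj hi
  simp [this]

lemma step {n : ℕ} (S : Finset (Fin n)) (j : Fin n) (hj : j ∉ S) :
    ∑ x : Fin n → Bool, |esum n S x| ≤ ∑ x : Fin n → Bool, |esum n (insert j S) x| := by
  have key : ∀ x : Fin n → Bool,
      2 * |esum n S x| ≤ |esum n (insert j S) x| +
        |esum n (insert j S) (fun i => xor (x i) (if i = j then true else false))| := by
    intro x
    have h1 : esum n (insert j S) x = sgn (x j) + esum n S x := by
      rw [esum, Finset.sum_insert hj]; rfl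
    have h2 : esum n (insert j S) (fun i => xor (x i) (if i = j then true else false))
        = - sgn (x j) + esum n S x := by
      rw [esum, Finset.sum_insert hj]
      rw [show (∑ i ∈ S, sgn (xor (x i) (if i = j then true else false))) =
        esum n S (fun i => xor (x i) (if i = j then true else false)) from rfl, esum_flip S j hj]
      congr 1
      cases x j <;> simp [sgn]
    rw [h1, h2]
    have habs := abs_add_le (sgn (x j) + esum n S x) (-sgn (x j) + esum n S x)
    have h3 : sgn (x j) + esum n S x + (-sgn (x j) + esum n S x) = 2 * esum n S x := by ring
    rw [h3] at habs
    calc 2 * |esum n S x| = |2 * esum n S x| := by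
          rw [abs_mul]; norm_num
      _ ≤ _ := habs
  have h4 : ∑ x : Fin n → Bool, 2 * |esum n S x| ≤
      ∑ x : Fin n → Bool, (|esum n (insert j S) x| +
        |esum n (insert j S) (fun i => xor (x i) (if i = j then true else false))|) :=
    Finset.sum_le_sum fun x _ => key x
  have h5 : ∑ x : Fin n → Bool,
      |esum n (insert j S) (fun i => xor (x i) (if i = j then true else false))| =
      ∑ x : Fin n → Bool, |esum n (insert j S) x| :=
    sum_mask (fun i => if i = j then true else false) (fun y => |esum n (insert j S) y|)
  rw [Finset.sum_add_distrib, h5, ← Finset.mul_sum] at h4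
  linarith

lemma le_univ {n : ℕ} (S : Finset (Fin n)) :
    ∑ x : Fin n → Bool, |esum n S x| ≤ ∑ x : Fin n → Bool, |esum n univ x| := by
  have H : ∀ k (S : Finset (Fin n)), (univ \ S).card = k →
      ∑ x : Fin n → Bool, |esum n S x| ≤ ∑ x : Fin n → Bool, |esum n univ x| := by
    intro k
    induction k with
    | zero =>
      intro S h
      have hS : S = univ := by
        have h1 : univ \ S = ∅ := Finset.card_eq_zero.mp h
        apply Finset.eq_univ_iff_forall.mpr
        intro a
        by_contra hc
        have : a ∈ univ \ S := Finset.mem_sdiff.mpr ⟨Finset.mem_univ a, hc⟩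
        simp [h1] at this
      rw [hS]
    | succ k ih =>
      intro S h
      have hne : (univ \ S).Nonempty := by
        rw [← Finset.card_pos, h]; omega
      obtain ⟨j, hjmem⟩ := hne
      have hj : j ∉ S := (Finset.mem_sdiff.mp hjmem).2
      calc ∑ x : Fin n → Bool, |esum n S x|
          ≤ ∑ x : Fin n → Bool, |esum n (insert j S) x| := step S j hj
        _ ≤ ∑ x : Fin n → Bool, |esum n univ x| := by
            apply ih
            rw [Finset.sdiff_insert, Finset.card_erase_of_mem hjmem, h]
            omega
  exact H _ S rfl

def SA (n : ℕ) (D : Fin n → Bool → Bool) (b : Bool) (x : Fin n → Bool) : ℤ :=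
  ∑ i : Fin n, if D i b = x i then 1 else 0

def Cb (n : ℕ) (b : Bool) (x : Fin n → Bool) : ℤ :=
  ∑ i : Fin n, if b = x i then 1 else 0

lemma Cb_add {n : ℕ} (x : Fin n → Bool) : Cb n false x + Cb n true x = n := by
  unfold Cb
  rw [← Finset.sum_add_distrib]
  calc ∑ i : Fin n, ((if false = x i then (1:ℤ) else 0) + if true = x i then 1 else 0)
      = ∑ _i : Fin n, (1:ℤ) := Finset.sum_congr rfl fun i _ => by cases x i <;> norm_num
    _ = n := by simp

lemma Cb_true {n : ℕ} (x : Fin n → Bool) : Cb n true x = (hammingWeight n x : ℤ) := by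
  unfold Cb hammingWeight
  rw [Finset.card_filter]
  push_cast
  exact Finset.sum_congr rfl fun i _ => by cases x i <;> simp

lemma SM_eq {n : ℕ} (x : Fin n → Bool) :
    (∑ i : Fin n, if maj n x = x i then (1:ℤ) else 0) = max (Cb n false x) (Cb n true x) := by
  have h1 := Cb_add x
  have h2 := Cb_true x
  by_cases hm : n ≤ 2 * hammingWeight n x
  · rw [show maj n x = true by simp [maj, hm]]
    rw [max_eq_right (show Cb n false x ≤ Cb n true x by omega)]
    rfl
  · rw [show maj n x = false by simp [maj, hm]]
    rw [max_eq_left (show Cb n true x ≤ Cb n false x by omega)]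
    rfl

lemma esum_univ {n : ℕ} (x : Fin n → Bool) :
    esum n univ x = Cb n true x - Cb n false x := by
  unfold esum Cb
  rw [← Finset.sum_sub_distrib]
  exact Finset.sum_congr rfl fun i _ => by cases x i <;> simp [sgn]

lemma maj_double {n : ℕ} (x : Fin n → Bool) :
    2 * (∑ i : Fin n, if maj n x = x i then (1:ℤ) else 0) = n + |esum n univ x| := by
  rw [SM_eq, esum_univ]
  have h1 := Cb_add x
  rcases le_total (Cb n false x) (Cb n true x) with h | h
  · rw [max_eq_right h, abs_of_nonneg (by omega)]; omega
  · rw [max_eq_left h, abs_of_nonpos (by omega)]; omega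

lemma SA_compl {n : ℕ} (D : Fin n → Bool → Bool) (b : Bool) (x : Fin n → Bool) :
    SA n D b (fun i => xor (x i) true) + SA n D b x = n := by
  unfold SA
  rw [← Finset.sum_add_distrib]
  calc ∑ i : Fin n, ((if D i b = xor (x i) true then (1:ℤ) else 0) + if D i b = x i then 1 else 0)
      = ∑ _i : Fin n, (1:ℤ) :=
        Finset.sum_congr rfl fun i _ => by cases D i b <;> cases x i <;> norm_num
    _ = n := by simp

lemma diff_eq {n : ℕ} (D : Fin n → Bool → Bool) (x : Fin n → Bool) :
    SA n D false x - SA n D true x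
      = esum n (univ.filter fun i => D i false ≠ D i true) (fun i => xor (x i) (!(D i false))) := by
  unfold SA esum
  rw [← Finset.sum_sub_distrib,
    ← Finset.sum_filter_add_sum_filter_not univ (fun i => D i false ≠ D i true)]
  have hz : ∑ i ∈ univ.filter (fun i => ¬ D i false ≠ D i true),
      (((if D i false = x i then (1:ℤ) else 0) - if D i true = x i then 1 else 0)) = 0 :=
    Finset.sum_eq_zero fun i hi => by
      have h : D i false = D i true := not_ne_iff.mp (Finset.mem_filter.mp hi).2
      rw [h]; ring
  rw [hz, add_zero]
  refine Finset.sum_congr rfl fun i hi => ?_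
  have h : D i false ≠ D i true := (Finset.mem_filter.mp hi).2
  cases hf : D i false <;> cases ht : D i true <;> cases hx : x i <;> simp_all [sgn]

end Stmt4Aux

open Finset Stmt4Aux in
/-- The strategy with majority encoding and identity decoding answers at least as
many input pairs `(x, i)` correctly as any pure classical strategy `(E, D)`. -/
theorem stmt4 (n : ℕ) (hn : 1 ≤ n) (E : (Fin n → Bool) → Bool)
    (D : Fin n → Bool → Bool) :
    (∑ x : Fin n → Bool, ∑ i : Fin n, if D i (E x) = x i then 1 else 0) ≤
      ∑ x : Fin n → Bool, ∑ i : Fin n, if maj n x = x i then 1 else 0 := by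
  zify
  have step1 : ∀ x : Fin n → Bool,
      (∑ i : Fin n, if D i (E x) = x i then (1:ℤ) else 0) ≤ max (SA n D false x) (SA n D true x) := by
    intro x
    cases hE : E x
    · exact le_max_left _ _
    · exact le_max_right _ _
  have hs : (∑ x : Fin n → Bool, ∑ i : Fin n, if D i (E x) = x i then (1:ℤ) else 0)
      ≤ ∑ x : Fin n → Bool, max (SA n D false x) (SA n D true x) :=
    Finset.sum_le_sum fun x _ => step1 x
  have hb : ∑ x : Fin n → Bool,
      max (SA n D false (fun i => xor (x i) true)) (SA n D true (fun i => xor (x i) true))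
      = ∑ x : Fin n → Bool, max (SA n D false x) (SA n D true x) :=
    sum_mask (fun _ => true) (fun y => max (SA n D false y) (SA n D true y))
  have hdouble : 2 * ∑ x : Fin n → Bool, max (SA n D false x) (SA n D true x)
      = ∑ x : Fin n → Bool, ((n : ℤ) + |SA n D false x - SA n D true x|) := by
    calc 2 * ∑ x : Fin n → Bool, max (SA n D false x) (SA n D true x)
        = (∑ x : Fin n → Bool, max (SA n D false x) (SA n D true x)) +
          ∑ x : Fin n → Bool,
            max (SA n D false (fun i => xor (x i) true)) (SA n D true (fun i => xor (x i) true)) := by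
          rw [hb]; ring
      _ = ∑ x : Fin n → Bool, (max (SA n D false x) (SA n D true x) +
            max (SA n D false (fun i => xor (x i) true)) (SA n D true (fun i => xor (x i) true))) :=
          (Finset.sum_add_distrib).symm
      _ = ∑ x : Fin n → Bool, ((n : ℤ) + |SA n D false x - SA n D true x|) := by
          refine Finset.sum_congr rfl fun x _ => ?_
          have h1 := SA_compl D false x
          have h2 := SA_compl D true x
          rcases le_total (SA n D false x) (SA n D true x) with h | h
          · rw [max_eq_right h, max_eq_left (by linarith), abs_of_nonpos (by linarith)]; linarith
          · rw [max_eq_left h, max_eq_right (by linarith), abs_of_nonneg (by linarith)]; linarith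
  have hmask : ∑ x : Fin n → Bool,
      |esum n (univ.filter fun i => D i false ≠ D i true) (fun i => xor (x i) (!(D i false)))|
      = ∑ x : Fin n → Bool, |esum n (univ.filter fun i => D i false ≠ D i true) x| :=
    sum_mask (fun i => !(D i false))
      (fun y => |esum n (univ.filter fun i => D i false ≠ D i true) y|)
  have hmid : ∑ x : Fin n → Bool, |SA n D false x - SA n D true x|
      ≤ ∑ x : Fin n → Bool, |esum n univ x| := by
    calc ∑ x : Fin n → Bool, |SA n D false x - SA n D true x|
        = ∑ x : Fin n → Bool,
          |esum n (univ.filter fun i => D i false ≠ D i true) (fun i => xor (x i) (!(D i false)))| :=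
          Finset.sum_congr rfl fun x _ => by rw [diff_eq D x]
      _ = ∑ x : Fin n → Bool, |esum n (univ.filter fun i => D i false ≠ D i true) x| := hmask
      _ ≤ ∑ x : Fin n → Bool, |esum n univ x| := le_univ _
  have h5 : ∑ x : Fin n → Bool, ((n:ℤ) + |SA n D false x - SA n D true x|)
      ≤ ∑ x : Fin n → Bool, ((n:ℤ) + |esum n univ x|) := by
    rw [Finset.sum_add_distrib, Finset.sum_add_distrib]
    exact add_le_add_right hmid _
  have h6 : ∑ x : Fin n → Bool, ((n:ℤ) + |esum n univ x|)
      = 2 * ∑ x : Fin n → Bool, ∑ i : Fin n, if maj n x = x i then (1:ℤ) else 0 := by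
    rw [Finset.mul_sum]
    exact Finset.sum_congr rfl fun x _ => (maj_double x).symm
  linarith
end

section
/- For every n ≥ 1, the average success probability of the pure classical n↦1 strategy with majority encoding and identity decoding equals 1/2 + C(n−1, ⌊(n−1)/2⌋)/2^n; equivalently, Σ_{x ∈ {0,1}^n} Σ_{i < n} [maj(x) = x i] = n·2^{n−1} + n·C(n−1, ⌊(n−1)/2⌋), where C denotes the binomial coefficient. -/
lemma my_inner_sum (n : ℕ) (x : Fin n → Bool) :
    (∑ i : Fin n, if maj n x = x i then 1 else 0)
      = if n ≤ 2 * hammingWeight n x then hammingWeight n x else n - hammingWeight n x := by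
  have hcard : ∀ b : Bool, (∑ i : Fin n, if b = x i then 1 else 0)
      = (Finset.univ.filter fun i => x i = b).card := by
    intro b
    rw [Finset.card_filter]
    refine Finset.sum_congr rfl fun i _ => ?_
    by_cases h : x i = b
    · rw [if_pos h.symm, if_pos h]
    · rw [if_neg (fun hh => h hh.symm), if_neg h]
  by_cases h : n ≤ 2 * hammingWeight n x
  · rw [if_pos h]
    have : maj n x = true := by simp [maj, h]
    rw [this, hcard]
    rfl
  · rw [if_neg h]
    have : maj n x = false := by simp [maj, h]
    rw [this, hcard]
    have key := Finset.card_filter_add_card_filter_not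
      (s := (Finset.univ : Finset (Fin n))) (p := fun i => x i = true)
    simp only [Finset.card_univ, Fintype.card_fin] at key
    have : (Finset.univ.filter fun i => x i = false).card
        = (Finset.univ.filter fun i => ¬ (x i = true)).card := by
      congr 1; ext i; simp
    rw [this]
    have hw : hammingWeight n x = (Finset.univ.filter fun i => x i = true).card := rfl
    omega

lemma my_fiber_card (n k : ℕ) :
    (Finset.univ.filter fun x : Fin n → Bool => hammingWeight n x = k).card
      = n.choose k := by
  rw [show n.choose k = (Finset.powersetCard k (Finset.univ : Finset (Fin n))).card by
    rw [Finset.card_powersetCard]; simp]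
  · apply Finset.card_bij (fun x _ => Finset.univ.filter fun i => x i = true)
    · intro x hx
      simp only [Finset.mem_filter, Finset.mem_univ, true_and] at hx
      simp [Finset.mem_powersetCard, hx]
      exact hx
    · intro x hx y hy hxy
      funext i
      have : (i ∈ Finset.univ.filter fun j => x j = true)
          ↔ (i ∈ Finset.univ.filter fun j => y j = true) := by rw [hxy]
      simp only [Finset.mem_filter, Finset.mem_univ, true_and] at this
      cases hxi : x i <;> cases hyi : y i <;> simp_all
    · intro s hs
      refine ⟨fun i => decide (i ∈ s), ?_, ?_⟩
      · simp only [Finset.mem_filter, Finset.mem_univ, true_and]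
        simp only [Finset.mem_powersetCard] at hs
        have : (Finset.univ.filter fun i => decide (i ∈ s) = true) = s := by
          ext i; simp
        simp [hammingWeight, this, hs.2]
      · ext i; simp

lemma count_eq (n : ℕ) :
    (∑ x : Fin n → Bool, ∑ i : Fin n, if maj n x = x i then 1 else 0)
      = ∑ k ∈ Finset.range (n + 1), n.choose k * (if n ≤ 2 * k then k else n - k) := by
  have h1 : (∑ x : Fin n → Bool, ∑ i : Fin n, if maj n x = x i then 1 else 0)
      = ∑ x : Fin n → Bool,
          (if n ≤ 2 * hammingWeight n x then hammingWeight n x else n - hammingWeight n x) :=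
    Finset.sum_congr rfl fun x _ => my_inner_sum n x
  rw [h1]
  rw [← Finset.sum_fiberwise_of_maps_to (g := fun x : Fin n → Bool => hammingWeight n x)
      (t := Finset.range (n + 1)) (fun x _ => by
        simp only [Finset.mem_range, Nat.lt_succ_iff]
        exact (Finset.card_filter_le _ _).trans (by simp))]
  refine Finset.sum_congr rfl fun k _ => ?_
  have : ∀ x ∈ Finset.univ.filter fun x : Fin n → Bool => hammingWeight n x = k,
      (if n ≤ 2 * hammingWeight n x then hammingWeight n x else n - hammingWeight n x)
        = (if n ≤ 2 * k then k else n - k) := by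
    intro x hx
    simp only [Finset.mem_filter] at hx
    rw [hx.2]
  rw [Finset.sum_congr rfl this, Finset.sum_const, my_fiber_card, smul_eq_mul]

lemma term_split (m k : ℕ) (hk : k ≤ m + 1) :
    ((m + 1).choose k : ℤ) * (if m + 1 ≤ 2 * k then (k : ℤ) else (m + 1 : ℤ) - k)
      = (m + 1) * (m.choose k : ℤ)
        + (if m + 1 ≤ 2 * k then (m + 1) * ((m.choose (k - 1) : ℤ) - m.choose k) else 0) := by
  have f1 : (m + 1) * m.choose k = (m + 1).choose k * (m + 1 - k) :=
    (Nat.add_one_mul_choose_eq m k).trans (Nat.choose_succ_right_eq (m + 1) k)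
  by_cases h : m + 1 ≤ 2 * k
  · obtain ⟨j, rfl⟩ : ∃ j, k = j + 1 := ⟨k - 1, by omega⟩
    have f2 : (m + 1) * m.choose j = (m + 1).choose (j + 1) * (j + 1) :=
      Nat.add_one_mul_choose_eq m j
    rw [if_pos h, if_pos h]
    have c1 : ((m + 1) : ℤ) * m.choose (j + 1) = (m + 1).choose (j + 1) * ((m : ℤ) + 1 - (j + 1)) := by
      have := f1
      zify [hk] at this
      linarith
    have c2 : ((m + 1) : ℤ) * m.choose j = (m + 1).choose (j + 1) * ((j : ℤ) + 1) := by
      exact_mod_cast f2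
    have hj : (j + 1 : ℕ) - 1 = j := rfl
    rw [hj]
    push_cast
    push_cast at c1 c2
    linarith
  · rw [if_neg h, if_neg h]
    have c1 : ((m + 1) : ℤ) * m.choose k = (m + 1).choose k * ((m : ℤ) + 1 - k) := by
      have := f1
      zify [hk] at this
      linarith
    push_cast at c1
    linarith

lemma arith (m : ℕ) :
    (∑ k ∈ Finset.range (m + 2),
        ((m + 1).choose k : ℤ) * (if m + 1 ≤ 2 * k then (k : ℤ) else (m + 1 : ℤ) - k))
      = (m + 1) * 2 ^ m + (m + 1) * (m.choose (m / 2) : ℤ) := by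
  have hsplit : ∀ k ∈ Finset.range (m + 2),
      ((m + 1).choose k : ℤ) * (if m + 1 ≤ 2 * k then (k : ℤ) else (m + 1 : ℤ) - k)
        = (m + 1) * (m.choose k : ℤ)
          + (if m + 1 ≤ 2 * k then (m + 1) * ((m.choose (k - 1) : ℤ) - m.choose k) else 0) :=
    fun k hk => term_split m k (by simpa [Nat.lt_succ_iff] using Finset.mem_range.mp hk)
  rw [Finset.sum_congr rfl hsplit, Finset.sum_add_distrib]
  have sumA : (∑ k ∈ Finset.range (m + 2), ((m : ℤ) + 1) * (m.choose k : ℤ))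
      = (m + 1) * 2 ^ m := by
    rw [← Finset.mul_sum]
    congr 1
    rw [Finset.sum_range_succ, Nat.choose_eq_zero_of_lt (by omega), Nat.cast_zero, add_zero]
    exact_mod_cast congrArg (Nat.cast : ℕ → ℤ) (Nat.sum_range_choose m)
  have sumB : (∑ k ∈ Finset.range (m + 2),
        (if m + 1 ≤ 2 * k then ((m : ℤ) + 1) * ((m.choose (k - 1) : ℤ) - m.choose k) else 0))
      = (m + 1) * (m.choose (m / 2) : ℤ) := by
    obtain ⟨q, hq⟩ : ∃ q, q = (m + 2) / 2 := ⟨_, rfl⟩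
    have hq1 : 1 ≤ q := by omega
    have hqle : q ≤ m + 2 := by omega
    have hiff : ∀ k, m + 1 ≤ 2 * k ↔ q ≤ k := by intro k; omega
    rw [← Finset.sum_subset (s₁ := Finset.Ico q (m + 2))
      (by intro k hk; simp only [Finset.mem_Ico] at hk; simp only [Finset.mem_range]; omega)
      (by intro k hk hk2
          simp only [Finset.mem_range] at hk
          simp only [Finset.mem_Ico] at hk2
          rw [if_neg (by rw [hiff]; omega)])]
    have : ∀ k ∈ Finset.Ico q (m + 2),
        (if m + 1 ≤ 2 * k then ((m : ℤ) + 1) * ((m.choose (k - 1) : ℤ) - m.choose k) else 0)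
          = ((m : ℤ) + 1) * ((m.choose (k - 1) : ℤ) - m.choose k) := by
      intro k hk
      simp only [Finset.mem_Ico] at hk
      rw [if_pos (by rw [hiff]; omega)]
    rw [Finset.sum_congr rfl this, Finset.sum_Ico_eq_sum_range]
    have hterm : ∀ j, ((m : ℤ) + 1) * ((m.choose (q + j - 1) : ℤ) - m.choose (q + j))
        = ((m : ℤ) + 1) * (((fun i => (m.choose (q - 1 + i) : ℤ)) j)
            - ((fun i => (m.choose (q - 1 + i) : ℤ)) (j + 1))) := by
      intro j
      have e1 : q + j - 1 = q - 1 + j := by omega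
      have e2 : q + j = q - 1 + (j + 1) := by omega
      rw [e1, e2]
    rw [Finset.sum_congr rfl fun j _ => hterm j, ← Finset.mul_sum,
      Finset.sum_range_sub' (fun i => (m.choose (q - 1 + i) : ℤ))]
    have e3 : q - 1 + 0 = m / 2 := by omega
    have e4 : q - 1 + (m + 2 - q) = m + 1 := by omega
    rw [e3, e4, show m.choose (m + 1) = 0 from Nat.choose_eq_zero_of_lt (by omega),
      Nat.cast_zero, sub_zero]
  rw [sumA, sumB]

lemma count_val (n : ℕ) (hn : 1 ≤ n) :
    (∑ x : Fin n → Bool, ∑ i : Fin n, if maj n x = x i then 1 else 0)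
      = n * 2 ^ (n - 1) + n * Nat.choose (n - 1) ((n - 1) / 2) := by
  obtain ⟨m, rfl⟩ : ∃ m, n = m + 1 := ⟨n - 1, by omega⟩
  rw [count_eq]
  have key : ((∑ k ∈ Finset.range (m + 2),
        (m + 1).choose k * (if m + 1 ≤ 2 * k then k else m + 1 - k) : ℕ) : ℤ)
      = ((m : ℤ) + 1) * 2 ^ m + ((m : ℤ) + 1) * (m.choose (m / 2) : ℤ) := by
    rw [← arith m]
    push_cast
    refine Finset.sum_congr rfl fun k hk => ?_
    simp only [Finset.mem_range] at hk
    by_cases h : m + 1 ≤ 2 * k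
    · rw [if_pos h, if_pos h]
    · rw [if_neg h, if_neg h, Nat.cast_sub (by omega)]
      push_cast
      ring
  have : (m + 1) * 2 ^ (m + 1 - 1) + (m + 1) * Nat.choose (m + 1 - 1) ((m + 1 - 1) / 2)
      = (m + 1) * 2 ^ m + (m + 1) * Nat.choose m (m / 2) := by
    simp
  rw [this]
  exact_mod_cast key

/-- The average success probability of the majority-encoding, identity-decoding
strategy is `1/2 + C(n-1, ⌊(n-1)/2⌋) / 2^n`; equivalently, the number of correctly
answered input pairs is `n·2^(n-1) + n·C(n-1, ⌊(n-1)/2⌋)`. -/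
theorem stmt5 (n : ℕ) (hn : 1 ≤ n) :
    ((1 : ℝ) / ((n : ℝ) * 2 ^ n)) *
        (∑ x : Fin n → Bool, ∑ i : Fin n, if maj n x = x i then (1 : ℝ) else 0)
      = 1 / 2 + (Nat.choose (n - 1) ((n - 1) / 2) : ℝ) / 2 ^ n ∧
    (∑ x : Fin n → Bool, ∑ i : Fin n, if maj n x = x i then 1 else 0)
      = n * 2 ^ (n - 1) + n * Nat.choose (n - 1) ((n - 1) / 2) := by
  refine ⟨?_, count_val n hn⟩
  have hcast : (∑ x : Fin n → Bool, ∑ i : Fin n, if maj n x = x i then (1 : ℝ) else 0)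
      = ((∑ x : Fin n → Bool, ∑ i : Fin n, if maj n x = x i then 1 else 0 : ℕ) : ℝ) := by
    push_cast
    rfl
  rw [hcast, count_val n hn]
  obtain ⟨m, rfl⟩ : ∃ m, n = m + 1 := ⟨n - 1, by omega⟩
  simp only [Nat.add_sub_cancel]
  have h1 : ((m : ℝ) + 1) ≠ 0 := by positivity
  have h2 : (2 : ℝ) ^ (m + 1) ≠ 0 := by positivity
  push_cast
  field_simp
  ring
end

section
/- For every odd integer n = 2m+1 with m ≥ 1, the quantity p(n) − 1/2 = C(2m, m)/2^{2m+1} satisfies the strict inequalities exp(1/(12n−11) − 2/(6n−6)) / √(2π(n−1)) < p(n) − 1/2 < exp(1/(12n−12) − 2/(6n−5)) / √(2π(n−1)). -/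
open Real
open Stirling Filter


noncomputable def rr (k : ℕ) : ℝ := Real.log (stirlingSeq k) - Real.log (Real.sqrt π)

lemma sqrtpi_pos : (0:ℝ) < Real.sqrt π := Real.sqrt_pos.mpr Real.pi_pos

lemma sqrtpi_le (n : ℕ) : Real.sqrt π ≤ stirlingSeq (n+1) := by
  refine le_of_tendsto tendsto_stirlingSeq_sqrt_pi ?_
  filter_upwards [Filter.eventually_ge_atTop (n+1)] with k hk
  obtain ⟨j, rfl⟩ := Nat.exists_eq_add_of_le hk
  have := stirlingSeq'_antitone (Nat.le_add_right n j)
  simpa [Function.comp, Nat.succ_eq_add_one, Nat.add_assoc, Nat.add_comm 1 j] using this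

lemma rr_nonneg (n : ℕ) : 0 ≤ rr (n+1) := by
  have := Real.log_le_log sqrtpi_pos (sqrtpi_le n)
  simpa [rr] using this

lemma d_lower (n : ℕ) :
    (1:ℝ)/3 * ((1 / (2 * ((n:ℝ)+1) + 1))^2) ≤
      Real.log (stirlingSeq (n+1)) - Real.log (stirlingSeq (n+2)) := by
  have h := log_stirlingSeq_diff_hasSum n
  have h0 := le_hasSum h 0 (fun i _ => by positivity)
  have e : (1:ℝ) / (2 * ((0:ℕ)+1:ℕ) + 1) * ((1 / (2 * ((n:ℕ)+1:ℕ) + 1)) ^ 2) ^ ((0:ℕ)+1:ℕ)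
      = 1/3 * ((1 / (2 * ((n:ℝ)+1) + 1))^2) := by push_cast; norm_num
  rw [e] at h0
  exact h0

lemma d_upper (n : ℕ) :
    Real.log (stirlingSeq (n+1)) - Real.log (stirlingSeq (n+2)) ≤
      (1:ℝ)/3 * (((1:ℝ) / (2 * ((n:ℝ)+1) + 1)) ^ 2 / (1 - ((1:ℝ) / (2 * ((n:ℝ)+1) + 1)) ^ 2)) := by
  have hb : (1:ℝ) < 2 * ((n:ℝ)+1) + 1 := by
    have : (0:ℝ) ≤ (n:ℝ) := Nat.cast_nonneg n
    linarith
  have h_nonneg : (0:ℝ) ≤ ((1:ℝ) / (2 * ((n:ℝ)+1) + 1)) ^ 2 := sq_nonneg _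
  have hlt : ((1:ℝ) / (2 * ((n:ℝ)+1) + 1)) ^ 2 < 1 := by
    rw [one_div, inv_pow]
    exact inv_lt_one_of_one_lt₀ (one_lt_pow₀ hb two_ne_zero)
  have g0 := (hasSum_geometric_of_lt_one h_nonneg hlt).mul_left
    ((1:ℝ)/3 * ((1:ℝ) / (2 * ((n:ℝ)+1) + 1)) ^ 2)
  have g : HasSum (fun k : ℕ => (1:ℝ)/3 * (((1:ℝ) / (2 * ((n:ℝ)+1) + 1)) ^ 2) ^ (k+1))
      ((1:ℝ)/3 * (((1:ℝ) / (2 * ((n:ℝ)+1) + 1)) ^ 2 / (1 - ((1:ℝ) / (2 * ((n:ℝ)+1) + 1)) ^ 2))) := by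
    convert g0 using 1
    · rfl
    · ext k; ring
    · rw [div_eq_mul_inv]; ring
  have hs := log_stirlingSeq_diff_hasSum n
  have hs' : HasSum (fun k : ℕ => (1:ℝ) / (2 * ((k:ℝ)+1) + 1) * (((1:ℝ) / (2 * ((n:ℝ)+1) + 1)) ^ 2) ^ (k+1))
      (Real.log (stirlingSeq (n+1)) - Real.log (stirlingSeq (n+2))) := by
    convert hs using 2 with k
    push_cast
    norm_num
  refine hasSum_le ?_ hs' g
  intro k
  have hk3 : (3:ℝ) ≤ 2 * ((k:ℝ)+1) + 1 := by
    have : (0:ℝ) ≤ (k:ℝ) := Nat.cast_nonneg k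
    linarith
  have h13 : (1:ℝ) / (2 * ((k:ℝ)+1) + 1) ≤ 1/3 := by
    apply one_div_le_one_div_of_le <;> linarith
  exact mul_le_mul_of_nonneg_right h13 (pow_nonneg h_nonneg _)

lemma tel_l (j : ℝ) (hj : 1 ≤ j) :
    1/(12*j+1) - 1/(12*(j+1)+1) < 1/3 * (1/(2*j+1))^2 := by
  have h1 : (0:ℝ) < 12*j+1 := by linarith
  have h2 : (0:ℝ) < 12*(j+1)+1 := by linarith
  have h3 : (0:ℝ) < 3*(2*j+1)^2 := by positivity
  have e : 1/3 * (1/(2*j+1))^2 = 1/(3*(2*j+1)^2) := by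
    field_simp
  rw [e, div_sub_div _ _ h1.ne' h2.ne', div_lt_div_iff₀ (by positivity) h3]
  nlinarith

lemma tel_u (j : ℝ) (hj : 1 ≤ j) :
    1/3 * ((1/(2*j+1))^2/(1-(1/(2*j+1))^2)) ≤ 1/(12*j) - 1/(12*(j+1)) := by
  have h1 : (0:ℝ) < 2*j+1 := by linarith
  have h2 : (1/(2*j+1))^2 ≠ 1 := by
    have : (1:ℝ) < (2*j+1)^2 := by nlinarith
    rw [one_div, inv_pow]
    intro hc
    rw [inv_eq_one_div] at hc
    have := div_eq_one_iff_eq (by positivity : ((2*j+1)^2:ℝ) ≠ 0) |>.mp hc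
    linarith
  have : 1/3 * ((1/(2*j+1))^2/(1-(1/(2*j+1))^2)) = 1/(12*j) - 1/(12*(j+1)) := by
    have hj0 : j ≠ 0 := by linarith
    have hj1 : j + 1 ≠ 0 := by linarith
    have hj2 : (0:ℝ) < j := by linarith
    have hne : j*12+j^2*12 ≠ 0 := by positivity
    have hne2 : (3*((2*j+1)^2-1):ℝ) ≠ 0 := by nlinarith
    field_simp

    ring_nf
    field_simp
    ring
  linarith [this.le]

lemma ub_partial (n N : ℕ) :
    Real.log (stirlingSeq (n+1)) - Real.log (stirlingSeq (n+1+N)) ≤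
      1/(12*((n:ℝ)+1)) - 1/(12*((n:ℝ)+1+N)) := by
  induction N with
  | zero => simp
  | succ N ih =>
    have hd := d_upper (n+N)
    have htu := tel_u ((n:ℝ)+1+N) (by
      have : (0:ℝ) ≤ (n:ℝ) := Nat.cast_nonneg n
      have : (0:ℝ) ≤ (N:ℝ) := Nat.cast_nonneg N
      linarith)
    have e : n+1+(N+1) = (n+N)+2 := by omega
    have e2 : n+1+N = (n+N)+1 := by omega
    rw [e]
    rw [e2] at ih
    push_cast at hd htu ih ⊢
    ring_nf at hd htu ih ⊢
    linarith

lemma lb_partial (n N : ℕ) :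
    1/(12*((n:ℝ)+1)+1) - 1/(12*((n:ℝ)+1+N)+1) ≤
      Real.log (stirlingSeq (n+1)) - Real.log (stirlingSeq (n+1+N)) := by
  induction N with
  | zero => simp
  | succ N ih =>
    have hd := d_lower (n+N)
    have htl := (tel_l ((n:ℝ)+1+N) (by
      have : (0:ℝ) ≤ (n:ℝ) := Nat.cast_nonneg n
      have : (0:ℝ) ≤ (N:ℝ) := Nat.cast_nonneg N
      linarith)).le
    have e : n+1+(N+1) = (n+N)+2 := by omega
    have e2 : n+1+N = (n+N)+1 := by omega
    rw [e]
    rw [e2] at ih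
    push_cast at hd htl ih ⊢
    ring_nf at hd htl ih ⊢
    linarith

lemma rr_tendsto (n : ℕ) : Tendsto (fun N : ℕ => rr (n+1+N)) atTop (nhds 0) := by
  have hlog : Tendsto (fun k : ℕ => Real.log (stirlingSeq k)) atTop (nhds (Real.log (Real.sqrt π))) :=
    ((Real.continuousAt_log sqrtpi_pos.ne').tendsto).comp tendsto_stirlingSeq_sqrt_pi
  have h0 : Tendsto (fun k : ℕ => rr k) atTop (nhds 0) := by
    have := hlog.sub (tendsto_const_nhds (x := Real.log (Real.sqrt π)))
    simpa [rr] using this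
  exact h0.comp (tendsto_atTop_mono (fun N => Nat.le_add_left N (n+1)) tendsto_id)

lemma aux_tendsto (n c : ℕ) (hc : 0 < c) :
    Tendsto (fun N : ℕ => 1/(12*((n:ℝ)+1+N)+c)) atTop (nhds 0) := by
  have h2 : Tendsto (fun N : ℕ => 12*((n:ℝ)+1+N)+c) atTop atTop := by
    apply tendsto_atTop_add_const_right
    apply Tendsto.const_mul_atTop (by norm_num : (0:ℝ) < 12)
    exact tendsto_atTop_add_const_left _ _ tendsto_natCast_atTop_atTop
  simpa [one_div, Pi.inv_def] using h2.inv_tendsto_atTop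

lemma aux_tendsto' (n : ℕ) :
    Tendsto (fun N : ℕ => 1/(12*((n:ℝ)+1+N))) atTop (nhds 0) := by
  have h2 : Tendsto (fun N : ℕ => 12*((n:ℝ)+1+N)) atTop atTop := by
    apply Tendsto.const_mul_atTop (by norm_num : (0:ℝ) < 12)
    exact tendsto_atTop_add_const_left _ _ tendsto_natCast_atTop_atTop
  convert h2.inv_tendsto_atTop using 1
  ext N
  simp [one_div]

lemma rr_upper' (n : ℕ) : rr (n+1) ≤ 1/(12*((n:ℝ)+1)) := by
  have hseq : ∀ N : ℕ, rr (n+1) ≤ 1/(12*((n:ℝ)+1)) - 1/(12*((n:ℝ)+1+N)) + rr (n+1+N) := by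
    intro N
    have h := ub_partial n N
    have : rr (n+1) - rr (n+1+N) = Real.log (stirlingSeq (n+1)) - Real.log (stirlingSeq (n+1+N)) := by
      simp [rr]
    linarith
  have ht : Tendsto (fun N : ℕ => 1/(12*((n:ℝ)+1)) - 1/(12*((n:ℝ)+1+N)) + rr (n+1+N)) atTop
      (nhds (1/(12*((n:ℝ)+1)))) := by
    have := (tendsto_const_nhds (x := 1/(12*((n:ℝ)+1))) (f := atTop (α := ℕ))).sub (aux_tendsto' n) |>.add (rr_tendsto n)
    simpa using this
  exact ge_of_tendsto' ht hseq

lemma rr_lower' (n : ℕ) : 1/(12*((n:ℝ)+1)+1) ≤ rr (n+1) := by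
  have hseq : ∀ N : ℕ, 1/(12*((n:ℝ)+1)+1) - 1/(12*((n:ℝ)+1+N)+1) ≤ rr (n+1) := by
    intro N
    have h := lb_partial n N
    have he : rr (n+1) - rr (n+1+N) = Real.log (stirlingSeq (n+1)) - Real.log (stirlingSeq (n+1+N)) := by
      simp [rr]
    have := rr_nonneg (n+N)
    have e2 : n+1+N = (n+N)+1 := by omega
    rw [e2] at he h
    linarith
  have ht : Tendsto (fun N : ℕ => 1/(12*((n:ℝ)+1)+1) - 1/(12*((n:ℝ)+1+N)+1)) atTop
      (nhds (1/(12*((n:ℝ)+1)+1))) := by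
    have := (tendsto_const_nhds (x := 1/(12*((n:ℝ)+1)+1)) (f := atTop (α := ℕ))).sub (aux_tendsto n 1 one_pos)
    simpa using this
  exact le_of_tendsto' ht hseq

lemma rr_lower_strict (n : ℕ) : 1/(12*((n:ℝ)+1)+1) < rr (n+1) := by
  have hd := d_lower n
  have htl := tel_l ((n:ℝ)+1) (by
    have : (0:ℝ) ≤ (n:ℝ) := Nat.cast_nonneg n
    linarith)
  have h2 := rr_lower' (n+1)
  have he : rr (n+1) - rr (n+2) = Real.log (stirlingSeq (n+1)) - Real.log (stirlingSeq (n+2)) := by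
    simp [rr]
  push_cast at h2 htl hd ⊢
  ring_nf at h2 htl hd he ⊢
  linarith

lemma rr_low (k : ℕ) (hk : 1 ≤ k) : 1/(12*(k:ℝ)+1) < rr k := by
  obtain ⟨j, rfl⟩ := Nat.exists_eq_add_of_le hk
  have h := rr_lower_strict j
  have e : 1 + j = j + 1 := by omega
  rw [e]
  push_cast at h ⊢
  convert h using 3

lemma rr_up (k : ℕ) (hk : 1 ≤ k) : rr k ≤ 1/(12*(k:ℝ)) := by
  obtain ⟨j, rfl⟩ := Nat.exists_eq_add_of_le hk
  have h := rr_upper' j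
  have e : 1 + j = j + 1 := by omega
  rw [e]
  push_cast at h ⊢
  convert h using 3

lemma stirling_eq (k : ℕ) (hk : 1 ≤ k) :
    stirlingSeq k = Real.sqrt π * Real.exp (rr k) := by
  obtain ⟨j, rfl⟩ := Nat.exists_eq_add_of_le hk
  have hpos : 0 < stirlingSeq (1+j) := by
    rw [Nat.add_comm]; exact stirlingSeq'_pos j
  rw [rr, Real.exp_sub, Real.exp_log hpos, Real.exp_log sqrtpi_pos]
  field_simp

lemma hfac (k : ℕ) (hk : 1 ≤ k) :
    ((Nat.factorial k : ℕ) : ℝ) = stirlingSeq k * (Real.sqrt (2*(k:ℝ)) * ((k:ℝ)/Real.exp 1)^k) := by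
  have hk0 : (0:ℝ) < (k:ℝ) := by exact_mod_cast hk
  have h1 : (0:ℝ) < Real.sqrt (2*(k:ℝ)) := Real.sqrt_pos.mpr (by linarith)
  have h2 : (0:ℝ) < ((k:ℝ)/Real.exp 1)^k := by positivity
  rw [stirlingSeq, div_mul_cancel₀]
  positivity

/-- Stirling-type bounds on `p(n) - 1/2 = C(2m, m)/2^{2m+1}` for odd `n = 2m + 1`. -/
theorem stmt8 (m : ℕ) (hm : 1 ≤ m) (n : ℝ) (hn : n = 2 * (m : ℝ) + 1) :
    Real.exp (1 / (12 * n - 11) - 2 / (6 * n - 6)) / Real.sqrt (2 * π * (n - 1))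
        < (Nat.choose (2 * m) m : ℝ) / 2 ^ (2 * m + 1) ∧
      (Nat.choose (2 * m) m : ℝ) / 2 ^ (2 * m + 1)
        < Real.exp (1 / (12 * n - 12) - 2 / (6 * n - 5)) / Real.sqrt (2 * π * (n - 1)) := by
  subst hn
  have hM0 : (0:ℝ) < (m:ℝ) := by exact_mod_cast hm
  have hs4 : Real.sqrt (2*((2*m:ℕ):ℝ)) = 2*Real.sqrt (m:ℝ) := by
    rw [show (2:ℝ)*((2*m:ℕ):ℝ) = (2*Real.sqrt (m:ℝ))^2 by
          rw [mul_pow, Real.sq_sqrt hM0.le]; push_cast; ring]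
    exact Real.sqrt_sq (by positivity)
  have hpow : (((2*m:ℕ):ℝ)/Real.exp 1)^(2*m) = 2^(2*m) * (((m:ℝ)/Real.exp 1)^m)^2 := by
    rw [show ((2*m:ℕ):ℝ)/Real.exp 1 = 2*((m:ℝ)/Real.exp 1) by push_cast; ring, mul_pow]
    congr 1
    rw [← pow_mul]
    congr 1
    omega
  have hf2m : ((Nat.factorial (2*m) : ℕ) : ℝ)
      = stirlingSeq (2*m) * ((2*Real.sqrt (m:ℝ)) * (2^(2*m) * (((m:ℝ)/Real.exp 1)^m)^2)) := by
    rw [hfac (2*m) (by omega), hs4, hpow]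
  have hQ : Real.sqrt (2*(m:ℝ)) * Real.sqrt (2*(m:ℝ)) = 2*(m:ℝ) :=
    Real.mul_self_sqrt (by linarith)
  have hfm2 : ((Nat.factorial m : ℕ) : ℝ) * ((Nat.factorial m : ℕ) : ℝ)
      = (stirlingSeq m)^2 * (2*(m:ℝ) * (((m:ℝ)/Real.exp 1)^m)^2) := by
    rw [hfac m hm]
    linear_combination ((stirlingSeq m)^2 * (((m:ℝ)/Real.exp 1)^m)^2) * hQ
  have hch : ((Nat.choose (2*m) m : ℕ) : ℝ)
      = ((Nat.factorial (2*m) : ℕ) : ℝ) / (((Nat.factorial m : ℕ) : ℝ) * ((Nat.factorial m : ℕ) : ℝ)) := by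
    rw [Nat.cast_choose ℝ (by omega : m ≤ 2*m), show 2*m - m = m by omega]
  have key : ((Nat.choose (2*m) m : ℕ) : ℝ) / 2^(2*m+1)
      = Real.exp (rr (2*m) - 2*rr m) / (2*(Real.sqrt π * Real.sqrt (m:ℝ))) := by
    rw [hch, hfm2, hf2m, stirling_eq (2*m) (by omega), stirling_eq m hm,
        Real.exp_sub, show (2:ℝ)*rr m = rr m + rr m by ring, Real.exp_add]
    generalize hu : Real.sqrt ((m:ℝ)) = u
    have hu0 : 0 < u := by rw [← hu]; positivity
    have hu2 : (m:ℝ) = u*u := by rw [← hu, Real.mul_self_sqrt hM0.le]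
    rw [hu2]
    have h1 : Real.exp (rr m) ≠ 0 := Real.exp_ne_zero _
    have h2 : Real.sqrt π ≠ 0 := sqrtpi_pos.ne'
    have h3 : ((u*u:ℝ)/Real.exp 1)^m ≠ 0 := by positivity
    field_simp
    ring
  have hden : Real.sqrt (2*π*(2*(m:ℝ)+1-1)) = 2*(Real.sqrt π * Real.sqrt (m:ℝ)) := by
    rw [show 2*π*(2*(m:ℝ)+1-1) = (2*(Real.sqrt π*Real.sqrt (m:ℝ)))^2 by
          rw [mul_pow, mul_pow, Real.sq_sqrt Real.pi_pos.le, Real.sq_sqrt hM0.le]; ring]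
    exact Real.sqrt_sq (by positivity)
  have hD : 0 < 2*(Real.sqrt π * Real.sqrt (m:ℝ)) := by positivity
  have ha2 := rr_low (2*m) (by omega)
  have hb2 := rr_up (2*m) (by omega)
  have ha1 := rr_low m hm
  have hb1 := rr_up m hm
  push_cast at ha2 hb2
  rw [key, hden]
  constructor
  · rw [div_lt_div_iff_of_pos_right hD, Real.exp_lt_exp]
    rw [show 12*(2*(m:ℝ)+1)-11 = 12*(2*(m:ℝ))+1 by ring,
        show 6*(2*(m:ℝ)+1)-6 = 12*(m:ℝ) by ring]
    have e : 2/(12*(m:ℝ)) = 2*(1/(12*(m:ℝ))) := by ring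
    linarith
  · rw [div_lt_div_iff_of_pos_right hD, Real.exp_lt_exp]
    rw [show 12*(2*(m:ℝ)+1)-12 = 12*(2*(m:ℝ)) by ring,
        show 6*(2*(m:ℝ)+1)-5 = 12*(m:ℝ)+1 by ring]
    have e : 2/(12*(m:ℝ)+1) = 2*(1/(12*(m:ℝ)+1)) := by ring
    linarith
end

section
/- For any n ≥ 1, any unit vectors v : Fin n → ℝ³ and any encoding vectors r : {0,1}^n → ℝ³ with ‖r x‖ ≤ 1 for all x, the average success probability (1/(2^n · n)) · Σ_{x ∈ {0,1}^n} Σ_{i < n} (1 + (−1)^{x i} · ⟨v i, r x⟩)/2 is at most 1/2 + 1/(2√n). (This is the upper bound for any n↦1 quantum random access code with shared randomness.) -/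
open scoped RealInnerProductSpace

open Finset

lemma signsum {n : ℕ} (i j : Fin n) (hij : i ≠ j) :
    ∑ x : Fin n → Bool, (if x i then (-1:ℝ) else 1) * (if x j then (-1:ℝ) else 1) = 0 := by
  set f : (Fin n → Bool) → ℝ := fun x => (if x i then (-1:ℝ) else 1) * (if x j then (-1:ℝ) else 1) with hf
  have hinv : Function.Involutive (fun x : Fin n → Bool => Function.update x i (!(x i))) := by
    intro x
    funext k
    by_cases hk : k = i
    · subst hk; simp
    · simp [Function.update_of_ne hk]
  have key : ∑ x : Fin n → Bool, f x = ∑ x : Fin n → Bool, -(f x) := by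
    refine Fintype.sum_bijective _ hinv.bijective _ _ ?_
    intro x
    have h1 : Function.update x i (!(x i)) i = !(x i) := by simp
    have h2 : Function.update x i (!(x i)) j = x j := Function.update_of_ne (Ne.symm hij) _ _
    simp only [hf, h1, h2]
    cases x i <;> cases x j <;> norm_num
  rw [Finset.sum_neg_distrib] at key
  linarith

/-- Upper bound for any `n ↦ 1` quantum random access code with shared randomness, in the
Bloch-vector formulation: for unit measurement vectors `v i` and encoding Bloch vectors
`r x` of norm at most `1`, the average success probability is at most `1/2 + 1/(2√n)`. -/
theorem stmt12 (n : ℕ) (hn : 1 ≤ n) (v : Fin n → EuclideanSpace ℝ (Fin 3))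
    (hv : ∀ i, ‖v i‖ = 1) (r : (Fin n → Bool) → EuclideanSpace ℝ (Fin 3))
    (hr : ∀ x, ‖r x‖ ≤ 1) :
    (1 / ((2 : ℝ) ^ n * n)) *
        ∑ x : Fin n → Bool, ∑ i : Fin n,
          (1 + (if x i then (-1 : ℝ) else 1) * ⟪v i, r x⟫) / 2
      ≤ 1 / 2 + 1 / (2 * Real.sqrt n) := by
  set ε : (Fin n → Bool) → Fin n → ℝ := fun x i => if x i then (-1:ℝ) else 1 with hε
  set s : (Fin n → Bool) → EuclideanSpace ℝ (Fin 3) := fun x => ∑ i, ε x i • v i with hs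
  have hεsq : ∀ x i, ε x i * ε x i = 1 := by
    intro x i; simp only [hε]; cases x i <;> norm_num
  -- sum of squared norms
  have hnormsq : ∑ x : Fin n → Bool, ‖s x‖^2 = 2^n * n := by
    have h1 : ∀ x : Fin n → Bool, ‖s x‖^2 = ∑ i, ∑ j, (ε x i * ε x j) * ⟪v i, v j⟫ := by
      intro x
      rw [← real_inner_self_eq_norm_sq, hs]
      rw [sum_inner]
      refine Finset.sum_congr rfl fun i _ => ?_
      rw [inner_sum]
      refine Finset.sum_congr rfl fun j _ => ?_
      rw [real_inner_smul_left, real_inner_smul_right]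
      ring
    calc ∑ x : Fin n → Bool, ‖s x‖^2
        = ∑ i, ∑ j, (∑ x : Fin n → Bool, ε x i * ε x j) * ⟪v i, v j⟫ := by
          simp_rw [h1, Finset.sum_mul]
          rw [Finset.sum_comm]
          refine Finset.sum_congr rfl fun i _ => Finset.sum_comm
      _ = ∑ i : Fin n, (2:ℝ)^n := by
          refine Finset.sum_congr rfl fun i _ => ?_
          rw [Finset.sum_eq_single i]
          · have hvv : ⟪v i, v i⟫ = (1:ℝ) := by
              rw [real_inner_self_eq_norm_sq, hv i]; norm_num
            simp [hεsq, hvv, Finset.card_univ, hv i]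
          · intro j _ hj
            rw [signsum i j (Ne.symm hj), zero_mul]
          · simp
      _ = 2^n * n := by
          rw [Finset.sum_const, Finset.card_univ, Fintype.card_fin, nsmul_eq_mul, mul_comm]
  -- Cauchy-Schwarz for sums
  have hsum_norm : ∑ x : Fin n → Bool, ‖s x‖ ≤ 2^n * Real.sqrt n := by
    have hcs := sq_sum_le_card_mul_sum_sq (s := (Finset.univ : Finset (Fin n → Bool)))
      (f := fun x => ‖s x‖)
    rw [hnormsq] at hcs
    have hcard : ((Finset.univ : Finset (Fin n → Bool)).card : ℝ) = 2^n := by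
      simp [Finset.card_univ]
    rw [hcard] at hcs
    have hnn : (0:ℝ) ≤ ∑ x : Fin n → Bool, ‖s x‖ :=
      Finset.sum_nonneg fun x _ => norm_nonneg _
    have h2 : (∑ x : Fin n → Bool, ‖s x‖)^2 ≤ (2^n * Real.sqrt n)^2 := by
      calc (∑ x : Fin n → Bool, ‖s x‖)^2 ≤ 2^n * (2^n * n) := hcs
        _ = (2^n * Real.sqrt n)^2 := by
            rw [mul_pow, Real.sq_sqrt (by positivity : (0:ℝ) ≤ (n:ℝ))]; ring
    have hb : (0:ℝ) ≤ 2^n * Real.sqrt n := by positivity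
    nlinarith [h2, hnn, hb]
  -- rewrite inner sums
  have hn0 : (0:ℝ) < (n:ℝ) := by exact_mod_cast hn
  have key : ∀ x : Fin n → Bool, ∑ i : Fin n, (1 + ε x i * ⟪v i, r x⟫) / 2
      = n / 2 + ⟪s x, r x⟫ / 2 := by
    intro x
    have hinner : ⟪s x, r x⟫ = ∑ i, ε x i * ⟪v i, r x⟫ := by
      rw [hs]; rw [sum_inner]
      exact Finset.sum_congr rfl fun i _ => real_inner_smul_left _ _ _
    rw [hinner, ← Finset.sum_div, Finset.sum_add_distrib, Finset.sum_const,
      Finset.card_univ, Fintype.card_fin, nsmul_eq_mul, mul_one, add_div]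
  have hbound : ∀ x : Fin n → Bool, ⟪s x, r x⟫ ≤ ‖s x‖ := fun x =>
    (real_inner_le_norm _ _).trans (mul_le_of_le_one_right (norm_nonneg _) (hr x))
  have hS : ∑ x : Fin n → Bool, ∑ i : Fin n, (1 + ε x i * ⟪v i, r x⟫) / 2
      ≤ 2^n * n / 2 + 2^n * Real.sqrt n / 2 := by
    calc ∑ x : Fin n → Bool, ∑ i : Fin n, (1 + ε x i * ⟪v i, r x⟫) / 2
        = ∑ x : Fin n → Bool, ((n:ℝ) / 2 + ⟪s x, r x⟫ / 2) := Finset.sum_congr rfl fun x _ => key x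
      _ ≤ ∑ x : Fin n → Bool, ((n:ℝ) / 2 + ‖s x‖ / 2) := by
          refine Finset.sum_le_sum fun x _ => ?_
          have := hbound x; linarith
      _ = 2^n * n / 2 + (∑ x : Fin n → Bool, ‖s x‖) / 2 := by
          rw [Finset.sum_add_distrib, Finset.sum_const, Finset.card_univ, ← Finset.sum_div]
          simp [nsmul_eq_mul, mul_div_assoc]
      _ ≤ 2^n * n / 2 + 2^n * Real.sqrt n / 2 := by
          have := hsum_norm; linarith
  have hpos : (0:ℝ) < 2^n * n := by positivity
  have hsn : (0:ℝ) < Real.sqrt n := Real.sqrt_pos.mpr hn0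
  have hid : (1/2 + 1/(2*Real.sqrt n)) * ((2:ℝ)^n * n) = 2^n * n / 2 + 2^n * Real.sqrt n / 2 := by
    field_simp
    linear_combination (-1:ℝ) * Real.sq_sqrt hn0.le
  rw [one_div, inv_mul_le_iff₀ hpos]
  calc ∑ x : Fin n → Bool, ∑ i : Fin n, (1 + ε x i * ⟪v i, r x⟫) / 2
      ≤ 2^n * n / 2 + 2^n * Real.sqrt n / 2 := hS
    _ = (1/2 + 1/(2*Real.sqrt n)) * ((2:ℝ)^n * n) := hid.symm
    _ = 2^n * n * (1/2 + 1/(2*Real.sqrt n)) := mul_comm _ _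
end

section
/- Every two-outcome qubit POVM can be simulated by a probabilistic combination of enhanced orthogonal measurements: for all real numbers a, b with 0 ≤ a ≤ 1 and 0 ≤ b ≤ 1, there exist nonnegative real numbers c₀, c₁, c₀₁, c₁₀ with c₀ + c₁ + c₀₁ + c₁₀ = 1 such that for all nonnegative real numbers p₀, p₁ with p₀ + p₁ = 1: c₀ + c₀₁·p₀ + c₁₀·p₁ = a·p₀ + b·p₁ and c₁ + c₀₁·p₁ + c₁₀·p₀ = (1−a)·p₀ + (1−b)·p₁. (Explicitly, one may take c₀ = min{a,b}, c₁ = 1 − (a+b) + min{a,b}, c₀₁ = a − min{a,b}, c₁₀ = b − min{a,b}.) -/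
/-- Every two-outcome qubit POVM, given by the diagonal entries `a, b ∈ [0,1]` of its
first element in an eigenbasis, can be simulated by a probabilistic combination of
enhanced orthogonal measurements: outputting `0` with probability `c₀`, outputting `1`
with probability `c₁`, measuring in the basis with probability `c₀₁`, and measuring in
the opposite basis with probability `c₁₀`. -/
theorem stmt19 (a b : ℝ) (ha0 : 0 ≤ a) (ha1 : a ≤ 1) (hb0 : 0 ≤ b) (hb1 : b ≤ 1) :
    ∃ c₀ c₁ c₀₁ c₁₀ : ℝ,
      0 ≤ c₀ ∧ 0 ≤ c₁ ∧ 0 ≤ c₀₁ ∧ 0 ≤ c₁₀ ∧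
      c₀ + c₁ + c₀₁ + c₁₀ = 1 ∧
      ∀ p₀ p₁ : ℝ, 0 ≤ p₀ → 0 ≤ p₁ → p₀ + p₁ = 1 →
        c₀ + c₀₁ * p₀ + c₁₀ * p₁ = a * p₀ + b * p₁ ∧
        c₁ + c₀₁ * p₁ + c₁₀ * p₀ = (1 - a) * p₀ + (1 - b) * p₁ := by
  refine ⟨min a b, 1 - (a + b) + min a b, a - min a b, b - min a b,
    le_min ha0 hb0, ?_, sub_nonneg.2 (min_le_left a b), sub_nonneg.2 (min_le_right a b),
    by ring, ?_⟩
  · rcases le_total a b with h | h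
    · simp [min_eq_left h]; linarith
    · simp [min_eq_right h]; linarith
  · intro p₀ p₁ _ _ hp
    rcases le_total a b with h | h <;>
      simp only [min_eq_left, min_eq_right, h] <;> constructor <;> nlinarith [hp]
end
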